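/- A bicomplex matrix A ∈ 𝔹ℂ^{n×n} with idempotent components 𝒜₁, 𝒜₂ ∈ ℂ^{n×n} is a state (i.e. hyperbolic positive with Tr(A) = 1) if and only if 𝒜₁ and 𝒜₂ are complex states, i.e. positive semidefinite complex matrices with Tr(𝒜₁) = Tr(𝒜₂) = 1. -/

import Mathlib

open Complex Matrix Kronecker BigOperators

open scoped ComplexOrder

/-- Bicomplex numbers, modeled as pairs `(z₁, z₂) ∈ ℂ × ℂ` representing `z₁ + j z₂`.
Addition is the componentwise (Prod) addition. -/
abbrev BC : Type := ℂ × ℂ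

noncomputable section

/-- Bicomplex multiplication: `(z₁,z₂)·(w₁,w₂) = (z₁w₁ − z₂w₂, z₁w₂ + z₂w₁)`. -/
def bcMul (z w : BC) : BC := (z.1 * w.1 - z.2 * w.2, z.1 * w.2 + z.2 * w.1)

/-- The `*`-conjugate `Z* = conj z₁ − j conj z₂`. -/
def bcStar (z : BC) : BC := ((starRingEnd ℂ) z.1, -((starRingEnd ℂ) z.2))

/-- First idempotent component `λ₁ = z₁ − i z₂`. -/
def idem1 (z : BC) : ℂ := z.1 - Complex.I * z.2

/-- Second idempotent component `λ₂ = z₁ + i z₂`. -/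
def idem2 (z : BC) : ℂ := z.1 + Complex.I * z.2

/-- Membership in `𝔻⁺`: both idempotent components are nonnegative real numbers. -/
def inDplus (z : BC) : Prop :=
  (idem1 z).im = 0 ∧ 0 ≤ (idem1 z).re ∧ (idem2 z).im = 0 ∧ 0 ≤ (idem2 z).re

/-- A bicomplex matrix `A = A₁ + j A₂` is a pair of complex matrices. -/
abbrev BCMat (I J : Type) : Type := Matrix I J ℂ × Matrix I J ℂ

/-- Bicomplex matrix multiplication, induced by bicomplex multiplication. -/
def bmul {I J K : Type} [Fintype J] (A : BCMat I J) (B : BCMat J K) : BCMat I K :=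
  (A.1 * B.1 - A.2 * B.2, A.1 * B.2 + A.2 * B.1)

/-- `(A*)ᵗ`: the entrywise `*`-conjugate followed by transpose. -/
def bcStarT {I J : Type} (A : BCMat I J) : BCMat J I := (A.1ᴴ, -(A.2ᴴ))

/-- The `(j,k)` entry of a bicomplex matrix, as a bicomplex number. -/
def bcEntry {I J : Type} (A : BCMat I J) (j : I) (k : J) : BC := (A.1 j k, A.2 j k)

/-- First idempotent component `𝒜₁ = A₁ − i A₂` of a bicomplex matrix. -/
def midem1 {I J : Type} (A : BCMat I J) : Matrix I J ℂ := A.1 - Complex.I • A.2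

/-- Second idempotent component `𝒜₂ = A₁ + i A₂` of a bicomplex matrix. -/
def midem2 {I J : Type} (A : BCMat I J) : Matrix I J ℂ := A.1 + Complex.I • A.2

/-- The bicomplex number `(c*)ᵗ · A · c`. -/
def quadForm {I : Type} [Fintype I] (A : BCMat I I) (c : I → BC) : BC :=
  ∑ j, ∑ k, bcMul (bcStar (c j)) (bcMul (bcEntry A j k) (c k))

/-- `A` is hyperbolic positive if `(c*)ᵗ · A · c ∈ 𝔻⁺` for every bicomplex vector `c`. -/
def HypPos {I : Type} [Fintype I] (A : BCMat I I) : Prop :=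
  ∀ c : I → BC, inDplus (quadForm A c)

/-- Bicomplex trace `Tr(A) = Tr(A₁) + j Tr(A₂)`. -/
def bcTrace {I : Type} [Fintype I] (A : BCMat I I) : BC := (A.1.trace, A.2.trace)

/-- The bicomplex tensor product
`A ⊗ⱼ B = (A₁⊗B₁ − A₂⊗B₂) + j (A₁⊗B₂ + A₂⊗B₁)`. -/
def bkron {I J K L : Type} (A : BCMat I J) (B : BCMat K L) : BCMat (I × K) (J × L) :=
  (A.1 ⊗ₖ B.1 - A.2 ⊗ₖ B.2, A.1 ⊗ₖ B.2 + A.2 ⊗ₖ B.1)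

end


noncomputable section Aux

lemma idem1_mul (z w : BC) : idem1 (bcMul z w) = idem1 z * idem1 w := by
  simp only [idem1, bcMul]
  linear_combination (-(z.2 * w.2)) * Complex.I_sq

lemma idem2_mul (z w : BC) : idem2 (bcMul z w) = idem2 z * idem2 w := by
  simp only [idem2, bcMul]
  linear_combination (-(z.2 * w.2)) * Complex.I_sq

lemma idem1_star (z : BC) : idem1 (bcStar z) = (starRingEnd ℂ) (idem1 z) := by
  simp only [idem1, bcStar, map_sub, _root_.map_mul, Complex.conj_I]
  ring

lemma idem2_star (z : BC) : idem2 (bcStar z) = (starRingEnd ℂ) (idem2 z) := by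
  simp only [idem2, bcStar, map_sub, map_add, _root_.map_mul, Complex.conj_I]
  ring

lemma idem1_sum {ι : Type*} (s : Finset ι) (f : ι → BC) :
    idem1 (∑ i ∈ s, f i) = ∑ i ∈ s, idem1 (f i) := by
  simp [idem1, Prod.fst_sum, Prod.snd_sum, Finset.mul_sum, Finset.sum_sub_distrib]

lemma idem2_sum {ι : Type*} (s : Finset ι) (f : ι → BC) :
    idem2 (∑ i ∈ s, f i) = ∑ i ∈ s, idem2 (f i) := by
  simp [idem2, Prod.fst_sum, Prod.snd_sum, Finset.mul_sum, Finset.sum_add_distrib]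

lemma midem1_apply {I J : Type} (A : BCMat I J) (j : I) (k : J) :
    midem1 A j k = idem1 (bcEntry A j k) := by
  simp [midem1, idem1, bcEntry, Matrix.sub_apply, Matrix.smul_apply]

lemma midem2_apply {I J : Type} (A : BCMat I J) (j : I) (k : J) :
    midem2 A j k = idem2 (bcEntry A j k) := by
  simp [midem2, idem2, bcEntry, Matrix.add_apply, Matrix.smul_apply]

lemma quad1 {n : ℕ} (A : BCMat (Fin n) (Fin n)) (c : Fin n → BC) :
    idem1 (quadForm A c) = star (fun j => idem1 (c j)) ⬝ᵥ (midem1 A *ᵥ fun j => idem1 (c j)) := by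
  unfold dotProduct Matrix.mulVec
  simp only [quadForm, idem1_sum, idem1_mul, idem1_star, Pi.star_apply, Finset.mul_sum,
    midem1_apply, dotProduct]
  exact Finset.sum_congr rfl fun j _ => Finset.sum_congr rfl fun k _ => by
    simp [Complex.star_def]

lemma quad2 {n : ℕ} (A : BCMat (Fin n) (Fin n)) (c : Fin n → BC) :
    idem2 (quadForm A c) = star (fun j => idem2 (c j)) ⬝ᵥ (midem2 A *ᵥ fun j => idem2 (c j)) := by
  unfold dotProduct Matrix.mulVec
  simp only [quadForm, idem2_sum, idem2_mul, idem2_star, Pi.star_apply, Finset.mul_sum,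
    midem2_apply, dotProduct]
  exact Finset.sum_congr rfl fun j _ => Finset.sum_congr rfl fun k _ => by
    simp [Complex.star_def]

/-- build a bicomplex number with prescribed idempotent components -/
def bcMk (d₁ d₂ : ℂ) : BC := ((d₁ + d₂) / 2, (d₂ - d₁) * (-Complex.I / 2))

lemma idem1_bcMk (d₁ d₂ : ℂ) : idem1 (bcMk d₁ d₂) = d₁ := by
  simp only [idem1, bcMk]
  linear_combination ((d₂ - d₁)/2) * Complex.I_sq

lemma idem2_bcMk (d₁ d₂ : ℂ) : idem2 (bcMk d₁ d₂) = d₂ := by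
  simp only [idem2, bcMk]
  linear_combination ((d₁ - d₂)/2) * Complex.I_sq

lemma quad_single {n : ℕ} (M : Matrix (Fin n) (Fin n) ℂ) (j k : Fin n) (a b : ℂ) :
    star (Pi.single j a + Pi.single k b) ⬝ᵥ M *ᵥ (Pi.single j a + Pi.single k b)
      = star a * (M j j * a) + star a * (M j k * b)
        + (star b * (M k j * a) + star b * (M k k * b)) := by
  have hs : ∀ (i : Fin n) (x : ℂ), star (Pi.single i x : Fin n → ℂ) = Pi.single i (star x) := by
    intro i x; funext l
    by_cases h : l = i <;> simp [Pi.single_apply, h]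
  rw [star_add, hs, hs, Matrix.mulVec_add, Matrix.mulVec_single, Matrix.mulVec_single,
    add_dotProduct, dotProduct_add, dotProduct_add,
    single_dotProduct, single_dotProduct, single_dotProduct,
    single_dotProduct]
  rfl

lemma herm_of_real {n : ℕ} (M : Matrix (Fin n) (Fin n) ℂ)
    (h : ∀ x : Fin n → ℂ, (star x ⬝ᵥ M *ᵥ x).im = 0) : M.IsHermitian := by
  have hd : ∀ j, (M j j).im = 0 := by
    intro j
    have h0 := h (Pi.single j 1 + Pi.single j 0)
    rw [quad_single] at h0
    simpa using h0
  apply Matrix.ext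
  intro j k
  rw [Matrix.conjTranspose_apply]
  have h1 := h (Pi.single k 1 + Pi.single j 1)
  have h2 := h (Pi.single k 1 + Pi.single j Complex.I)
  rw [quad_single] at h1 h2
  simp only [star_one, one_mul, mul_one, Complex.star_def, Complex.conj_I] at h1 h2
  have e1 : (M k j).im + (M j k).im = 0 := by
    have := hd j; have := hd k
    simp [Complex.add_im, Complex.mul_im] at h1 ⊢
    linarith
  have e2 : (M k j).re - (M j k).re = 0 := by
    have := hd j; have := hd k
    simp [Complex.add_im, Complex.mul_im, Complex.mul_re] at h2 ⊢
    linarith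
  apply Complex.ext
  · simpa [Complex.conj_re] using by linarith
  · simpa [Complex.conj_im] using by linarith

end Aux

noncomputable section

/-- `A` is a bicomplex state (hyperbolic positive with trace `1`)
iff both idempotent components are complex states. -/
theorem bc_state_iff {n : ℕ} (A : BCMat (Fin n) (Fin n)) :
    (HypPos A ∧ bcTrace A = ((1 : ℂ), (0 : ℂ))) ↔
      ((midem1 A).PosSemidef ∧ (midem2 A).PosSemidef ∧
        (midem1 A).trace = 1 ∧ (midem2 A).trace = 1) := by
  constructor
  · rintro ⟨hp, ht⟩
    rw [bcTrace, Prod.mk.injEq] at ht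
    obtain ⟨ht1, ht2⟩ := ht
    have key1 : ∀ x : Fin n → ℂ,
        (star x ⬝ᵥ midem1 A *ᵥ x).im = 0 ∧ 0 ≤ (star x ⬝ᵥ midem1 A *ᵥ x).re := by
      intro x
      obtain ⟨h1, h2, _, _⟩ := hp (fun j => bcMk (x j) (x j))
      rw [quad1] at h1 h2
      simp only [idem1_bcMk] at h1 h2
      exact ⟨h1, h2⟩
    have key2 : ∀ x : Fin n → ℂ,
        (star x ⬝ᵥ midem2 A *ᵥ x).im = 0 ∧ 0 ≤ (star x ⬝ᵥ midem2 A *ᵥ x).re := by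
      intro x
      obtain ⟨_, _, h1, h2⟩ := hp (fun j => bcMk (x j) (x j))
      rw [quad2] at h1 h2
      simp only [idem2_bcMk] at h1 h2
      exact ⟨h1, h2⟩
    refine ⟨.of_dotProduct_mulVec_nonneg (herm_of_real _ (fun x => (key1 x).1)) fun x => ?_,
      .of_dotProduct_mulVec_nonneg (herm_of_real _ (fun x => (key2 x).1)) fun x => ?_, ?_, ?_⟩
    · rw [Complex.le_def]
      exact ⟨by simpa using (key1 x).2, by simpa using ((key1 x).1).symm⟩
    · rw [Complex.le_def]
      exact ⟨by simpa using (key2 x).2, by simpa using ((key2 x).1).symm⟩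
    · simp [midem1, Matrix.trace_sub, Matrix.trace_smul, ht1, ht2]
    · simp [midem2, Matrix.trace_add, Matrix.trace_smul, ht1, ht2]
  · rintro ⟨h1, h2, t1, t2⟩
    have t1' : A.1.trace - Complex.I * A.2.trace = 1 := by
      simpa [midem1, Matrix.trace_sub, Matrix.trace_smul, smul_eq_mul] using t1
    have t2' : A.1.trace + Complex.I * A.2.trace = 1 := by
      simpa [midem2, Matrix.trace_add, Matrix.trace_smul, smul_eq_mul] using t2
    have htr2 : A.2.trace = 0 := by
      have hI : Complex.I * A.2.trace = 0 := by linear_combination (t2' - t1') / 2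
      exact (mul_eq_zero.mp hI).resolve_left Complex.I_ne_zero
    have htr1 : A.1.trace = 1 := by linear_combination (t1' + t2') / 2
    refine ⟨?_, ?_⟩
    · intro c
      have q1 := h1.dotProduct_mulVec_nonneg (fun j => idem1 (c j))
      have q2 := h2.dotProduct_mulVec_nonneg (fun j => idem2 (c j))
      rw [Complex.le_def] at q1 q2
      refine ⟨?_, ?_, ?_, ?_⟩
      · rw [quad1]; simpa using q1.2.symm
      · rw [quad1]; simpa using q1.1
      · rw [quad2]; simpa using q2.2.symm
      · rw [quad2]; simpa using q2.1
    · rw [bcTrace, Prod.mk.injEq]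
      exact ⟨htr1, htr2⟩

end
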